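/- Let r be a positive integer and let a, b be positive real numbers. For any coloring c of the points of the Euclidean space E^(13r+4) with r colors (i.e., c maps points to Fin r), there exist four points p₁, p₂, p₃, p₄ forming a rectangle with side lengths a and b (that is, dist(p₁,p₂) = dist(p₃,p₄) = a, dist(p₂,p₃) = dist(p₄,p₁) = b, and dist(p₁,p₃) = dist(p₂,p₄) = √(a² + b²)) such that either c(p₁) = c(p₂) = c(p₃) = c(p₄) (a monochromatic rectangle) or c(p₁), c(p₂), c(p₃), c(p₄) are pairwise distinct (a rainbow rectangle). -/

import Mathlib

open Finset

theorem grid_lemma (r : ℕ) (hr : 1 ≤ r) (χ : Fin (6*r+2) → Fin (7*r+2) → Fin r) :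
    ∃ u u' v v', u ≠ u' ∧ v ≠ v' ∧
      ((χ u v = χ u' v ∧ χ u' v = χ u' v' ∧ χ u' v' = χ u v') ∨
       (χ u v ≠ χ u' v ∧ χ u v ≠ χ u' v' ∧ χ u v ≠ χ u v' ∧
        χ u' v ≠ χ u' v' ∧ χ u' v ≠ χ u v' ∧ χ u' v' ≠ χ u v')) := by
  classical
  by_contra Hc
  have Hm : ∀ u u' v v', u ≠ u' → v ≠ v' →
      ¬(χ u v = χ u' v ∧ χ u' v = χ u' v' ∧ χ u' v' = χ u v') := by
    intro u u' v v' h1 h2 h3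
    exact Hc ⟨u, u', v, v', h1, h2, Or.inl h3⟩
  have Hr : ∀ u u' v v', u ≠ u' → v ≠ v' →
      ¬(χ u v ≠ χ u' v ∧ χ u v ≠ χ u' v' ∧ χ u v ≠ χ u v' ∧
        χ u' v ≠ χ u' v' ∧ χ u' v ≠ χ u v' ∧ χ u' v' ≠ χ u v') := by
    intro u u' v v' h1 h2 h3
    exact Hc ⟨u, u', v, v', h1, h2, Or.inr h3⟩
  clear Hc
  have Hm4 : ∀ u u' v v', u ≠ u' → v ≠ v' → χ u v = χ u' v → χ u v' = χ u' v' →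
      χ u v ≠ χ u v' := by
    intro u u' v v' hu hv h1 h2 h3
    exact Hm u u' v v' hu hv ⟨h1, by rw [← h1, h3, h2], h2.symm⟩
  have Hcross : ∀ u u' v v', u ≠ u' → v ≠ v' → χ u v ≠ χ u' v → χ u v' ≠ χ u' v' →
      (χ u v = χ u v' ∨ χ u v = χ u' v' ∨ χ u' v = χ u v' ∨ χ u' v = χ u' v') := by
    intro u u' v v' hu hv h1 h2
    by_contra hcon
    push_neg at hcon
    obtain ⟨c1, c2, c3, c4⟩ := hcon
    exact Hr u u' v v' hu hv ⟨h1, c2, c1, c4, c3, fun h => h2 h.symm⟩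
  rcases le_or_gt r 2 with hr2 | hr3
  · -- small case
    have hemb : ∀ u : Fin (r+1), (u : ℕ) < 6*r+2 :=
      fun u => lt_of_lt_of_le u.isLt (by omega)
    set emb : Fin (r+1) → Fin (6*r+2) := fun u => ⟨(u : ℕ), hemb u⟩ with hembdef
    have hembinj : ∀ u u' : Fin (r+1), emb u = emb u' → u = u' := by
      intro u u' h
      have h2 : ((emb u : Fin (6*r+2)) : ℕ) = ((emb u' : Fin (6*r+2)) : ℕ) :=
        congrArg Fin.val h
      exact Fin.ext h2
    have hex : ∀ v : Fin (7*r+2), ∃ q : (Fin (r+1) × Fin (r+1)) × Fin r,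
        q.1.1 ≠ q.1.2 ∧ χ (emb q.1.1) v = q.2 ∧ χ (emb q.1.2) v = q.2 := by
      intro v
      obtain ⟨x, y, hxy, hfxy⟩ := Fintype.exists_ne_map_eq_of_card_lt
        (fun u : Fin (r+1) => χ (emb u) v) (by simp)
      exact ⟨⟨⟨x, y⟩, χ (emb x) v⟩, hxy, rfl, hfxy.symm⟩
    choose F hF1 hF2 hF3 using hex
    have hmaps : ∀ v : Fin (7*r+2), v ∈ (univ : Finset (Fin (7*r+2))) →
        F v ∈ ((univ : Finset (Fin (r+1))).offDiag ×ˢ (univ : Finset (Fin r))) := by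
      intro v _
      simp only [Finset.mem_product, Finset.mem_offDiag]
      exact ⟨⟨mem_univ _, mem_univ _, hF1 v⟩, mem_univ _⟩
    have hcard : ((univ : Finset (Fin (r+1))).offDiag ×ˢ (univ : Finset (Fin r))).card
        < (univ : Finset (Fin (7*r+2))).card := by
      rw [Finset.card_product, Finset.offDiag_card]
      simp only [Finset.card_univ, Fintype.card_fin]
      interval_cases r <;> norm_num
    obtain ⟨v, _, v', _, hvv, hFeq⟩ :=
      Finset.exists_ne_map_eq_of_card_lt_of_maps_to hcard hmaps
    have h1 : (F v).1.1 = (F v').1.1 := by rw [hFeq]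
    have h2 : (F v).1.2 = (F v').1.2 := by rw [hFeq]
    have h3 : (F v).2 = (F v').2 := by rw [hFeq]
    have hune : emb (F v).1.1 ≠ emb (F v).1.2 := fun h => hF1 v (hembinj _ _ h)
    have e1 : χ (emb (F v).1.2) v' = (F v).2 := by rw [h2, hF3 v', ← h3]
    have e2 : χ (emb (F v).1.1) v' = (F v).2 := by rw [h1, hF2 v', ← h3]
    exact Hm (emb (F v).1.1) (emb (F v).1.2) v v' hune hvv
      ⟨(hF2 v).trans (hF3 v).symm, (hF3 v).trans e1.symm, e1.trans e2.symm⟩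
  · -- main case : r ≥ 3
    set d : Fin (6*r+2) → Fin r → ℕ :=
      fun u x => (univ.filter (fun v => χ u v = x)).card with hd
    have pair_claim : ∀ u u' : Fin (6*r+2), u ≠ u' →
        (∃ x, 2*r+1 ≤ d u x) ∨ (∃ x, 2*r+1 ≤ d u' x) := by
      intro u u' huu
      by_contra hcon
      push_neg at hcon
      obtain ⟨h1, h2⟩ := hcon
      have hdu : ∀ x, (univ.filter (fun v => χ u v = x)).card ≤ 2*r :=
        fun x => by have := h1 x; simp only [hd] at this; omega
      have hdu' : ∀ x, (univ.filter (fun v => χ u' v = x)).card ≤ 2*r :=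
        fun x => by have := h2 x; simp only [hd] at this; omega
      set A : Finset (Fin (7*r+2)) := univ.filter (fun v => χ u v = χ u' v) with hA
      have hAcard : A.card ≤ r := by
        have hinj : Set.InjOn (fun v => χ u v) A := by
          intro v hv v' hv' hEq
          by_contra hne
          have hv1 : χ u v = χ u' v := (Finset.mem_filter.mp hv).2
          have hv2 : χ u v' = χ u' v' := (Finset.mem_filter.mp hv').2
          exact Hm4 u u' v v' huu hne hv1 hv2 hEq
        calc A.card ≤ (univ : Finset (Fin r)).card :=
              Finset.card_le_card_of_injOn _ (fun v _ => mem_univ _) hinj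
          _ = r := by simp
      set Ds : Finset (Fin (7*r+2)) := univ \ A with hDs
      have hDmem : ∀ v ∈ Ds, χ u v ≠ χ u' v := by
        intro v hv
        have := (Finset.mem_sdiff.mp hv).2
        simpa [hA] using this
      have hDcard : 6*r+2 ≤ Ds.card := by
        have : Ds.card = (7*r+2) - A.card := by
          rw [hDs, Finset.card_sdiff_of_subset (Finset.subset_univ _)]
          simp
        omega
      have hsub3 : ∀ x y z : Fin r,
          (∀ v ∈ Ds, χ u v = x ∨ χ u v = y ∨ χ u v = z) → False := by
        intro x y z hall
        have hsubset : Ds ⊆ (univ.filter (fun v => χ u v = x)) ∪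
            (univ.filter (fun v => χ u v = y)) ∪ (univ.filter (fun v => χ u v = z)) := by
          intro v hv
          rcases hall v hv with h | h | h <;>
            simp [Finset.mem_union, Finset.mem_filter, h]
        have hle := Finset.card_le_card hsubset
        have hu1 := Finset.card_union_le ((univ.filter (fun v => χ u v = x)) ∪
            (univ.filter (fun v => χ u v = y))) (univ.filter (fun v => χ u v = z))
        have hu2 := Finset.card_union_le (univ.filter (fun v => χ u v = x))
            (univ.filter (fun v => χ u v = y))
        have e1 := hdu x
        have e2 := hdu y
        have e3 := hdu z
        omega
      have hstar : ∀ x : Fin r,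
          (∀ v ∈ Ds, χ u v = x ∨ χ u' v = x) → False := by
        intro x hall
        have hsubset : Ds ⊆ (univ.filter (fun v => χ u v = x)) ∪
            (univ.filter (fun v => χ u' v = x)) := by
          intro v hv
          rcases hall v hv with h | h <;>
            simp [Finset.mem_union, Finset.mem_filter, h]
        have hle := Finset.card_le_card hsubset
        have hu2 := Finset.card_union_le (univ.filter (fun v => χ u v = x))
            (univ.filter (fun v => χ u' v = x))
        have e1 := hdu x
        have e2 := hdu' x
        omega
      have hDne : Ds.Nonempty := Finset.card_pos.mp (by omega)
      obtain ⟨v₀, hv₀⟩ := hDne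
      set α := χ u v₀ with hαdef
      set β := χ u' v₀ with hβdef
      have hα0 : χ u v₀ = α := rfl
      have hβ0 : χ u' v₀ = β := rfl
      have hαβ : α ≠ β := hDmem v₀ hv₀
      have hnsα : ¬(∀ v ∈ Ds, χ u v = α ∨ χ u' v = α) := fun h => hstar α h
      push_neg at hnsα
      obtain ⟨v₁, hv₁D, hv₁u, hv₁u'⟩ := hnsα
      have hv₁v₀ : v₁ ≠ v₀ := by
        intro h; rw [h] at hv₁u; exact hv₁u hα0
      have hd1 : χ u v₁ ≠ χ u' v₁ := hDmem v₁ hv₁D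
      obtain ⟨γ, hγα, hγβ, hP1⟩ : ∃ γ, γ ≠ α ∧ γ ≠ β ∧
          ((χ u v₁ = β ∧ χ u' v₁ = γ) ∨ (χ u v₁ = γ ∧ χ u' v₁ = β)) := by
        have hc := Hcross u u' v₀ v₁ huu (Ne.symm hv₁v₀) (hDmem v₀ hv₀) hd1
        rcases hc with h | h | h | h
        · exact absurd (h.symm.trans hα0) hv₁u
        · exact absurd (h.symm.trans hα0) hv₁u'
        · have hb : χ u v₁ = β := h.symm.trans hβ0
          exact ⟨χ u' v₁, hv₁u', fun hh => hd1 (hb.trans hh.symm), Or.inl ⟨hb, rfl⟩⟩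
        · have hb : χ u' v₁ = β := h.symm.trans hβ0
          exact ⟨χ u v₁, hv₁u, fun hh => hd1 (hh.trans hb.symm), Or.inr ⟨rfl, hb⟩⟩
      have hnsβ : ¬(∀ v ∈ Ds, χ u v = β ∨ χ u' v = β) := fun h => hstar β h
      push_neg at hnsβ
      obtain ⟨v₂, hv₂D, hv₂u, hv₂u'⟩ := hnsβ
      have hv₂v₀ : v₂ ≠ v₀ := by
        intro h; rw [h] at hv₂u'; exact hv₂u' hβ0
      have hv₂v₁ : v₂ ≠ v₁ := by
        intro h
        rcases hP1 with ⟨hh, _⟩ | ⟨_, hh⟩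
        · rw [h] at hv₂u; exact hv₂u hh
        · rw [h] at hv₂u'; exact hv₂u' hh
      have hα2 : χ u v₂ = α ∨ χ u' v₂ = α := by
        have hc := Hcross u u' v₀ v₂ huu (Ne.symm hv₂v₀) (hDmem v₀ hv₀) (hDmem v₂ hv₂D)
        rcases hc with h | h | h | h
        · exact Or.inl (h.symm.trans hα0)
        · exact Or.inr (h.symm.trans hα0)
        · exact absurd (h.symm.trans hβ0) hv₂u
        · exact absurd (h.symm.trans hβ0) hv₂u'
      have hγ2 : χ u v₂ = γ ∨ χ u' v₂ = γ := by
        have hc := Hcross u u' v₁ v₂ huu (Ne.symm hv₂v₁) hd1 (hDmem v₂ hv₂D)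
        rcases hP1 with ⟨hb, hg⟩ | ⟨hg, hb⟩
        · rcases hc with h | h | h | h
          · exact absurd (h.symm.trans hb) hv₂u
          · exact absurd (h.symm.trans hb) hv₂u'
          · exact Or.inl (h.symm.trans hg)
          · exact Or.inr (h.symm.trans hg)
        · rcases hc with h | h | h | h
          · exact Or.inl (h.symm.trans hg)
          · exact Or.inr (h.symm.trans hg)
          · exact absurd (h.symm.trans hb) hv₂u
          · exact absurd (h.symm.trans hb) hv₂u'
      refine hsub3 α β γ ?_
      intro v hv
      by_contra hp
      push_neg at hp
      obtain ⟨hpα, hpβ, hpγ⟩ := hp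
      have hvv₀ : v ≠ v₀ := fun h => hpα (h.symm ▸ hα0)
      have hvv₁ : v ≠ v₁ := by
        intro h
        rcases hP1 with ⟨hh, _⟩ | ⟨hh, _⟩
        · exact hpβ (h.symm ▸ hh)
        · exact hpγ (h.symm ▸ hh)
      have hvv₂ : v ≠ v₂ := by
        intro h
        rcases hα2 with hh | hh
        · exact hpα (h.symm ▸ hh)
        · rcases hγ2 with hh2 | hh2
          · exact hpγ (h.symm ▸ hh2)
          · exact hγα (hh2.symm.trans hh)
      have hq01 : χ u' v = α ∨ χ u' v = β := by
        have hc := Hcross u u' v₀ v huu (Ne.symm hvv₀) (hDmem v₀ hv₀) (hDmem v hv)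
        rcases hc with h | h | h | h
        · exact absurd (h.symm.trans hα0) hpα
        · exact Or.inl (h.symm.trans hα0)
        · exact absurd (h.symm.trans hβ0) hpβ
        · exact Or.inr (h.symm.trans hβ0)
      have hq12 : χ u' v = β ∨ χ u' v = γ := by
        have hc := Hcross u u' v₁ v huu (Ne.symm hvv₁) hd1 (hDmem v hv)
        rcases hP1 with ⟨hb, hg⟩ | ⟨hg, hb⟩
        · rcases hc with h | h | h | h
          · exact absurd (h.symm.trans hb) hpβ
          · exact Or.inl (h.symm.trans hb)
          · exact absurd (h.symm.trans hg) hpγ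
          · exact Or.inr (h.symm.trans hg)
        · rcases hc with h | h | h | h
          · exact absurd (h.symm.trans hg) hpγ
          · exact Or.inr (h.symm.trans hg)
          · exact absurd (h.symm.trans hb) hpβ
          · exact Or.inl (h.symm.trans hb)
      have hq02 : χ u' v = α ∨ χ u' v = γ := by
        have hc := Hcross u u' v₂ v huu (Ne.symm hvv₂) (hDmem v₂ hv₂D) (hDmem v hv)
        rcases hα2 with ha2 | ha2
        · have hg2 : χ u' v₂ = γ := by
            rcases hγ2 with hh | hh
            · exact absurd (hh.symm.trans ha2) hγα
            · exact hh
          rcases hc with h | h | h | h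
          · exact absurd (h.symm.trans ha2) hpα
          · exact Or.inl (h.symm.trans ha2)
          · exact absurd (h.symm.trans hg2) hpγ
          · exact Or.inr (h.symm.trans hg2)
        · have hg2 : χ u v₂ = γ := by
            rcases hγ2 with hh | hh
            · exact hh
            · exact absurd (hh.symm.trans ha2) hγα
          rcases hc with h | h | h | h
          · exact absurd (h.symm.trans hg2) hpγ
          · exact Or.inr (h.symm.trans hg2)
          · exact absurd (h.symm.trans ha2) hpα
          · exact Or.inl (h.symm.trans ha2)
      rcases hq01 with h | h
      · rcases hq12 with h2 | h2
        · exact hαβ (h.symm.trans h2)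
        · exact hγα (h2.symm.trans h)
      · rcases hq02 with h2 | h2
        · exact hαβ (h2.symm.trans h)
        · exact hγβ (h2.symm.trans h)
    -- Good rows
    haveI : Nonempty (Fin r) := ⟨⟨0, by omega⟩⟩
    set Good : Finset (Fin (6*r+2)) := univ.filter (fun u => ∃ x, 2*r+1 ≤ d u x)
      with hGoodDef
    have hBad : (univ \ Good).card ≤ 1 := by
      rw [Finset.card_le_one]
      intro a ha b hb
      by_contra hab
      have ha' := (Finset.mem_sdiff.mp ha).2
      have hb' := (Finset.mem_sdiff.mp hb).2
      simp only [hGoodDef, Finset.mem_filter, mem_univ, true_and, not_exists,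
        not_le] at ha' hb'
      rcases pair_claim a b hab with ⟨x, hx⟩ | ⟨x, hx⟩
      · have := ha' x; omega
      · have := hb' x; omega
    have hGoodcard : 6*r+1 ≤ Good.card := by
      have h1 : (univ \ Good).card = (univ : Finset (Fin (6*r+2))).card - Good.card :=
        Finset.card_sdiff_of_subset (Finset.subset_univ _)
      have h2 : Good.card ≤ (univ : Finset (Fin (6*r+2))).card :=
        Finset.card_le_card (Finset.subset_univ _)
      simp only [Finset.card_univ, Fintype.card_fin] at h1 h2
      omega
    have hwit : ∀ u ∈ Good, ∃ x, 2*r+1 ≤ d u x := fun u hu => (Finset.mem_filter.mp hu).2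
    choose! w hw using hwit
    obtain ⟨x, -, hx7⟩ := Finset.exists_lt_card_fiber_of_mul_lt_card_of_maps_to
      (t := (univ : Finset (Fin r))) (f := w) (fun u _ => mem_univ _)
      (by simp only [Finset.card_univ, Fintype.card_fin]; omega : (univ : Finset (Fin r)).card * 6 < Good.card)
    obtain ⟨U, hUsub, hUcard⟩ := Finset.exists_subset_card_eq (n := 7) hx7
    have hUd : ∀ u ∈ U, 2*r+1 ≤ d u x := by
      intro u hu
      have h1 := Finset.mem_filter.mp (hUsub hu)
      have h2 := hw u h1.1
      rw [h1.2] at h2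
      exact h2
    have hUGood : ∀ u ∈ U, u ∈ Good := fun u hu => (Finset.mem_filter.mp (hUsub hu)).1
    set fib : Fin (7*r+2) → Finset (Fin (6*r+2)) :=
      fun v => U.filter (fun u => χ u v = x) with hfib
    have hswap : ∑ u ∈ U, d u x = ∑ v : Fin (7*r+2), (fib v).card := by
      simp only [hd, hfib, Finset.card_filter]
      rw [Finset.sum_comm]
    have hlow : 7 * (2*r+1) ≤ ∑ u ∈ U, d u x := by
      calc 7*(2*r+1) = U.card • (2*r+1) := by rw [hUcard]; simp
        _ ≤ _ := Finset.card_nsmul_le_sum U _ _ hUd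
    have hpair : ∀ p ∈ U.offDiag,
        (univ.filter (fun v => χ p.1 v = x ∧ χ p.2 v = x)).card ≤ 1 := by
      intro p hp
      rw [Finset.card_le_one]
      intro v1 hv1 v2 hv2
      by_contra hne
      have h1 := (Finset.mem_filter.mp hv1).2
      have h2 := (Finset.mem_filter.mp hv2).2
      have hpne : p.1 ≠ p.2 := (Finset.mem_offDiag.mp hp).2.2
      exact Hm p.1 p.2 v1 v2 hpne hne
        ⟨h1.1.trans h1.2.symm, h1.2.trans h2.2.symm, h2.2.trans h2.1.symm⟩
    have hoff : ∀ v, (fib v).offDiag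
        = U.offDiag.filter (fun p => χ p.1 v = x ∧ χ p.2 v = x) := by
      intro v
      ext p
      simp only [Finset.mem_offDiag, Finset.mem_filter, hfib]
      tauto
    have hswap2 : ∑ p ∈ U.offDiag, (univ.filter (fun v => χ p.1 v = x ∧ χ p.2 v = x)).card
        = ∑ v : Fin (7*r+2), ((fib v).offDiag).card := by
      have hv : ∀ v : Fin (7*r+2), ((fib v).offDiag).card
          = ∑ p ∈ U.offDiag, if χ p.1 v = x ∧ χ p.2 v = x then 1 else 0 := by
        intro v; rw [hoff v, Finset.card_filter]
      simp only [hv, Finset.card_filter]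
      rw [Finset.sum_comm]
    have hup : ∑ p ∈ U.offDiag, (univ.filter (fun v => χ p.1 v = x ∧ χ p.2 v = x)).card
        ≤ 42 := by
      calc ∑ p ∈ U.offDiag, (univ.filter (fun v => χ p.1 v = x ∧ χ p.2 v = x)).card
          ≤ ∑ _p ∈ U.offDiag, 1 := Finset.sum_le_sum hpair
        _ = U.offDiag.card := by simp
        _ = 42 := by rw [Finset.offDiag_card, hUcard]
    have hconv : ∀ v : Fin (7*r+2), 2 * ((fib v).card - 1) ≤ ((fib v).offDiag).card := by
      intro v
      rw [Finset.offDiag_card]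
      rcases Nat.lt_or_ge (fib v).card 2 with h | h
      · set c := (fib v).card
        interval_cases c <;> simp
      · have h1 : 2 * ((fib v).card - 1) ≤ (fib v).card * ((fib v).card - 1) :=
          Nat.mul_le_mul_right _ h
        have h2 : (fib v).card * ((fib v).card - 1)
            = (fib v).card * (fib v).card - (fib v).card := by
          obtain ⟨n, hn⟩ : ∃ n, (fib v).card = n + 1 :=
            ⟨(fib v).card - 1, by omega⟩
          rw [hn]
          have : (n+1) * (n+1) = (n+1)*n + (n+1) := by ring
          simp [this]
        omega
    have hA1 : ∑ v : Fin (7*r+2), ((fib v).offDiag).card ≤ 42 := hswap2 ▸ hup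
    have hA2 : 2 * (∑ v : Fin (7*r+2), ((fib v).card - 1)) ≤ 42 := by
      rw [Finset.mul_sum]
      exact le_trans (Finset.sum_le_sum fun v _ => hconv v) hA1
    have hA3 : ∑ v : Fin (7*r+2), (fib v).card
        ≤ ∑ v : Fin (7*r+2), (((fib v).card - 1) + 1) :=
      Finset.sum_le_sum (fun v _ => by omega)
    have hA4 : ∑ v : Fin (7*r+2), (((fib v).card - 1) + 1)
        = (∑ v : Fin (7*r+2), ((fib v).card - 1)) + (7*r+2) := by
      rw [Finset.sum_add_distrib]
      simp [Finset.card_univ]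
    omega


section Geom
variable (r : ℕ) (a b : ℝ)

noncomputable def pt (u : Fin (6*r+2)) (v : Fin (7*r+2)) :
    EuclideanSpace ℝ (Fin (13*r+4)) :=
  WithLp.toLp 2 fun i => if (i : ℕ) = (u : ℕ) then a / Real.sqrt 2
    else if (i : ℕ) = 6*r+2+(v : ℕ) then b / Real.sqrt 2 else 0

lemma sum_support_pair {n : ℕ} (g : Fin n → ℝ) {i j : Fin n} (hij : i ≠ j)
    (h : ∀ k, k ≠ i → k ≠ j → g k = 0) : ∑ k, g k = g i + g j := by
  rw [← Finset.sum_pair hij]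
  exact (Finset.sum_subset (Finset.subset_univ _) fun k _ hk => by
    simp only [Finset.mem_insert, Finset.mem_singleton, not_or] at hk
    exact h k hk.1 hk.2).symm

lemma sum_support_four {n : ℕ} (g : Fin n → ℝ) {i₁ i₂ i₃ i₄ : Fin n}
    (h12 : i₁ ≠ i₂) (h13 : i₁ ≠ i₃) (h14 : i₁ ≠ i₄)
    (h23 : i₂ ≠ i₃) (h24 : i₂ ≠ i₄) (h34 : i₃ ≠ i₄)
    (h : ∀ k, k ≠ i₁ → k ≠ i₂ → k ≠ i₃ → k ≠ i₄ → g k = 0) :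
    ∑ k, g k = g i₁ + g i₂ + g i₃ + g i₄ := by
  have key : ∑ k ∈ ({i₁, i₂, i₃, i₄} : Finset (Fin n)), g k
      = g i₁ + g i₂ + g i₃ + g i₄ := by
    rw [Finset.sum_insert (by simp [h12, h13, h14]),
      Finset.sum_insert (by simp [h23, h24]), Finset.sum_pair h34]
    ring
  rw [← key]
  exact (Finset.sum_subset (Finset.subset_univ _) fun k _ hk => by
    simp only [Finset.mem_insert, Finset.mem_singleton, not_or] at hk
    exact h k hk.1 hk.2.1 hk.2.2.1 hk.2.2.2).symm

lemma sq2 : (Real.sqrt 2) ^ 2 = 2 := Real.sq_sqrt (by norm_num)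

lemma pt_dist_row (ha : 0 < a) (u u' : Fin (6*r+2)) (v : Fin (7*r+2)) (huu : u ≠ u') :
    dist (pt r a b u v) (pt r a b u' v) = a := by
  have hval : (u : ℕ) ≠ (u' : ℕ) := fun h => huu (Fin.ext h)
  have hu : (u : ℕ) < 13*r+4 := lt_of_lt_of_le u.isLt (by omega)
  have hu' : (u' : ℕ) < 13*r+4 := lt_of_lt_of_le u'.isLt (by omega)
  set i₁ : Fin (13*r+4) := ⟨(u : ℕ), hu⟩ with hi₁
  set i₂ : Fin (13*r+4) := ⟨(u' : ℕ), hu'⟩ with hi₂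
  have hii : i₁ ≠ i₂ := by
    simp only [hi₁, hi₂, ne_eq, Fin.mk.injEq]
    exact hval
  rw [EuclideanSpace.dist_eq]
  have hsum := sum_support_pair (fun i => dist (pt r a b u v i) (pt r a b u' v i) ^ 2)
    hii (by
      intro k hk1 hk2
      have hk1' : (k : ℕ) ≠ (u : ℕ) := fun h => hk1 (Fin.ext h)
      have hk2' : (k : ℕ) ≠ (u' : ℕ) := fun h => hk2 (Fin.ext h)
      have : pt r a b u v k = pt r a b u' v k := by
        simp only [pt, PiLp.toLp_apply]
        rw [if_neg hk1', if_neg hk2']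
      simp [this])
  rw [hsum]
  simp only []
  have e1 : pt r a b u v i₁ = a / Real.sqrt 2 := by
    simp [pt, hi₁]
  have e2 : pt r a b u' v i₁ = 0 := by
    have hne : (u : ℕ) ≠ 6*r+2+(v : ℕ) := by have := u.isLt; omega
    simp only [pt, PiLp.toLp_apply, hi₁]
    rw [if_neg hval, if_neg hne]
  have e3 : pt r a b u v i₂ = 0 := by
    have hne : (u' : ℕ) ≠ 6*r+2+(v : ℕ) := by have := u'.isLt; omega
    simp only [pt, PiLp.toLp_apply, hi₂]
    rw [if_neg (Ne.symm hval), if_neg hne]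
  have e4 : pt r a b u' v i₂ = a / Real.sqrt 2 := by
    simp [pt, hi₂]
  rw [e1, e2, e3, e4]
  have h2 : dist (a / Real.sqrt 2) (0:ℝ) ^ 2 = a^2/2 := by
    rw [Real.dist_eq, sq_abs, sub_zero, div_pow, sq2]
  have h3 : dist (0:ℝ) (a / Real.sqrt 2) ^ 2 = a^2/2 := by
    rw [dist_comm, Real.dist_eq, sq_abs, sub_zero, div_pow, sq2]
  rw [h2, h3]
  have : a^2/2 + a^2/2 = a^2 := by ring
  rw [this, Real.sqrt_sq ha.le]

lemma pt_dist_col (hb : 0 < b) (u : Fin (6*r+2)) (v v' : Fin (7*r+2)) (hvv : v ≠ v') :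
    dist (pt r a b u v) (pt r a b u v') = b := by
  have hval : (v : ℕ) ≠ (v' : ℕ) := fun h => hvv (Fin.ext h)
  have hv : 6*r+2+(v : ℕ) < 13*r+4 := by have := v.isLt; omega
  have hv' : 6*r+2+(v' : ℕ) < 13*r+4 := by have := v'.isLt; omega
  set i₁ : Fin (13*r+4) := ⟨6*r+2+(v : ℕ), hv⟩ with hi₁
  set i₂ : Fin (13*r+4) := ⟨6*r+2+(v' : ℕ), hv'⟩ with hi₂
  have hii : i₁ ≠ i₂ := by
    simp only [hi₁, hi₂, ne_eq, Fin.mk.injEq]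
    omega
  rw [EuclideanSpace.dist_eq]
  have hsum := sum_support_pair (fun i => dist (pt r a b u v i) (pt r a b u v' i) ^ 2)
    hii (by
      intro k hk1 hk2
      have hk1' : (k : ℕ) ≠ 6*r+2+(v : ℕ) := fun h => hk1 (Fin.ext h)
      have hk2' : (k : ℕ) ≠ 6*r+2+(v' : ℕ) := fun h => hk2 (Fin.ext h)
      have : pt r a b u v k = pt r a b u v' k := by
        simp only [pt, PiLp.toLp_apply]
        by_cases hku : (k : ℕ) = (u : ℕ)
        · rw [if_pos hku, if_pos hku]
        · rw [if_neg hku, if_neg hku, if_neg hk1', if_neg hk2']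
      simp [this])
  rw [hsum]
  simp only []
  have hu1 : (6*r+2+(v : ℕ)) ≠ (u : ℕ) := by have := u.isLt; omega
  have hu2 : (6*r+2+(v' : ℕ)) ≠ (u : ℕ) := by have := u.isLt; omega
  have e1 : pt r a b u v i₁ = b / Real.sqrt 2 := by
    simp only [pt, PiLp.toLp_apply, hi₁]
    rw [if_neg hu1, if_pos trivial]
  have e2 : pt r a b u v' i₁ = 0 := by
    simp only [pt, PiLp.toLp_apply, hi₁]
    rw [if_neg hu1, if_neg (by omega : (6*r+2+(v : ℕ)) ≠ 6*r+2+(v' : ℕ))]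
  have e3 : pt r a b u v i₂ = 0 := by
    simp only [pt, PiLp.toLp_apply, hi₂]
    rw [if_neg hu2, if_neg (by omega : (6*r+2+(v' : ℕ)) ≠ 6*r+2+(v : ℕ))]
  have e4 : pt r a b u v' i₂ = b / Real.sqrt 2 := by
    simp only [pt, PiLp.toLp_apply, hi₂]
    rw [if_neg hu2, if_pos trivial]
  rw [e1, e2, e3, e4]
  have h2 : dist (b / Real.sqrt 2) (0:ℝ) ^ 2 = b^2/2 := by
    rw [Real.dist_eq, sq_abs, sub_zero, div_pow, sq2]
  have h3 : dist (0:ℝ) (b / Real.sqrt 2) ^ 2 = b^2/2 := by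
    rw [dist_comm, Real.dist_eq, sq_abs, sub_zero, div_pow, sq2]
  rw [h2, h3]
  have : b^2/2 + b^2/2 = b^2 := by ring
  rw [this, Real.sqrt_sq hb.le]

lemma pt_dist_diag (u u' : Fin (6*r+2)) (v v' : Fin (7*r+2))
    (huu : u ≠ u') (hvv : v ≠ v') :
    dist (pt r a b u v) (pt r a b u' v') = Real.sqrt (a^2 + b^2) := by
  have hvalu : (u : ℕ) ≠ (u' : ℕ) := fun h => huu (Fin.ext h)
  have hvalv : (v : ℕ) ≠ (v' : ℕ) := fun h => hvv (Fin.ext h)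
  have hu : (u : ℕ) < 13*r+4 := lt_of_lt_of_le u.isLt (by omega)
  have hu' : (u' : ℕ) < 13*r+4 := lt_of_lt_of_le u'.isLt (by omega)
  have hv : 6*r+2+(v : ℕ) < 13*r+4 := by have := v.isLt; omega
  have hv' : 6*r+2+(v' : ℕ) < 13*r+4 := by have := v'.isLt; omega
  have hub : (u : ℕ) < 6*r+2 := u.isLt
  have hub' : (u' : ℕ) < 6*r+2 := u'.isLt
  set i₁ : Fin (13*r+4) := ⟨(u : ℕ), hu⟩ with hi₁
  set i₂ : Fin (13*r+4) := ⟨(u' : ℕ), hu'⟩ with hi₂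
  set i₃ : Fin (13*r+4) := ⟨6*r+2+(v : ℕ), hv⟩ with hi₃
  set i₄ : Fin (13*r+4) := ⟨6*r+2+(v' : ℕ), hv'⟩ with hi₄
  have h12 : i₁ ≠ i₂ := by simp only [hi₁, hi₂, ne_eq, Fin.mk.injEq]; omega
  have h13 : i₁ ≠ i₃ := by simp only [hi₁, hi₃, ne_eq, Fin.mk.injEq]; omega
  have h14 : i₁ ≠ i₄ := by simp only [hi₁, hi₄, ne_eq, Fin.mk.injEq]; omega
  have h23 : i₂ ≠ i₃ := by simp only [hi₂, hi₃, ne_eq, Fin.mk.injEq]; omega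
  have h24 : i₂ ≠ i₄ := by simp only [hi₂, hi₄, ne_eq, Fin.mk.injEq]; omega
  have h34 : i₃ ≠ i₄ := by simp only [hi₃, hi₄, ne_eq, Fin.mk.injEq]; omega
  rw [EuclideanSpace.dist_eq]
  have hsum := sum_support_four (fun i => dist (pt r a b u v i) (pt r a b u' v' i) ^ 2)
    h12 h13 h14 h23 h24 h34 (by
      intro k hk1 hk2 hk3 hk4
      have hk1' : (k : ℕ) ≠ (u : ℕ) := fun h => hk1 (Fin.ext h)
      have hk2' : (k : ℕ) ≠ (u' : ℕ) := fun h => hk2 (Fin.ext h)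
      have hk3' : (k : ℕ) ≠ 6*r+2+(v : ℕ) := fun h => hk3 (Fin.ext h)
      have hk4' : (k : ℕ) ≠ 6*r+2+(v' : ℕ) := fun h => hk4 (Fin.ext h)
      have : pt r a b u v k = pt r a b u' v' k := by
        simp only [pt, PiLp.toLp_apply]
        rw [if_neg hk1', if_neg hk2', if_neg hk3', if_neg hk4']
      simp [this])
  rw [hsum]
  simp only []
  have e1 : pt r a b u v i₁ = a / Real.sqrt 2 := by simp [pt, hi₁]
  have e1' : pt r a b u' v' i₁ = 0 := by
    simp only [pt, PiLp.toLp_apply, hi₁]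
    rw [if_neg hvalu, if_neg (by omega : (u : ℕ) ≠ 6*r+2+(v' : ℕ))]
  have e2 : pt r a b u v i₂ = 0 := by
    simp only [pt, PiLp.toLp_apply, hi₂]
    rw [if_neg (Ne.symm hvalu), if_neg (by omega : (u' : ℕ) ≠ 6*r+2+(v : ℕ))]
  have e2' : pt r a b u' v' i₂ = a / Real.sqrt 2 := by simp [pt, hi₂]
  have e3 : pt r a b u v i₃ = b / Real.sqrt 2 := by
    simp only [pt, PiLp.toLp_apply, hi₃]
    rw [if_neg (by omega : (6*r+2+(v : ℕ)) ≠ (u : ℕ)), if_pos trivial]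
  have e3' : pt r a b u' v' i₃ = 0 := by
    simp only [pt, PiLp.toLp_apply, hi₃]
    rw [if_neg (by omega : (6*r+2+(v : ℕ)) ≠ (u' : ℕ)),
      if_neg (by omega : (6*r+2+(v : ℕ)) ≠ 6*r+2+(v' : ℕ))]
  have e4 : pt r a b u v i₄ = 0 := by
    simp only [pt, PiLp.toLp_apply, hi₄]
    rw [if_neg (by omega : (6*r+2+(v' : ℕ)) ≠ (u : ℕ)),
      if_neg (by omega : (6*r+2+(v' : ℕ)) ≠ 6*r+2+(v : ℕ))]
  have e4' : pt r a b u' v' i₄ = b / Real.sqrt 2 := by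
    simp only [pt, PiLp.toLp_apply, hi₄]
    rw [if_neg (by omega : (6*r+2+(v' : ℕ)) ≠ (u' : ℕ)), if_pos trivial]
  rw [e1, e1', e2, e2', e3, e3', e4, e4']
  have ha2 : dist (a / Real.sqrt 2) (0:ℝ) ^ 2 = a^2/2 := by
    rw [Real.dist_eq, sq_abs, sub_zero, div_pow, sq2]
  have ha3 : dist (0:ℝ) (a / Real.sqrt 2) ^ 2 = a^2/2 := by
    rw [dist_comm, Real.dist_eq, sq_abs, sub_zero, div_pow, sq2]
  have hb2 : dist (b / Real.sqrt 2) (0:ℝ) ^ 2 = b^2/2 := by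
    rw [Real.dist_eq, sq_abs, sub_zero, div_pow, sq2]
  have hb3 : dist (0:ℝ) (b / Real.sqrt 2) ^ 2 = b^2/2 := by
    rw [dist_comm, Real.dist_eq, sq_abs, sub_zero, div_pow, sq2]
  rw [ha2, ha3, hb2, hb3]
  congr 1
  ring

end Geom


theorem mono_or_rainbow_rectangle
    (r : ℕ) (hr : 0 < r) (a b : ℝ) (ha : 0 < a) (hb : 0 < b)
    (c : EuclideanSpace ℝ (Fin (13 * r + 4)) → Fin r) :
    ∃ p₁ p₂ p₃ p₄ : EuclideanSpace ℝ (Fin (13 * r + 4)),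
      dist p₁ p₂ = a ∧ dist p₃ p₄ = a ∧
      dist p₂ p₃ = b ∧ dist p₄ p₁ = b ∧
      dist p₁ p₃ = Real.sqrt (a ^ 2 + b ^ 2) ∧
      dist p₂ p₄ = Real.sqrt (a ^ 2 + b ^ 2) ∧
      ((c p₁ = c p₂ ∧ c p₂ = c p₃ ∧ c p₃ = c p₄) ∨
       (c p₁ ≠ c p₂ ∧ c p₁ ≠ c p₃ ∧ c p₁ ≠ c p₄ ∧
        c p₂ ≠ c p₃ ∧ c p₂ ≠ c p₄ ∧ c p₃ ≠ c p₄)) := by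
  obtain ⟨u, u', v, v', huu, hvv, hcase⟩ :=
    grid_lemma r hr (fun u v => c (pt r a b u v))
  exact ⟨pt r a b u v, pt r a b u' v, pt r a b u' v', pt r a b u v',
    pt_dist_row r a b ha u u' v huu,
    pt_dist_row r a b ha u' u v' (Ne.symm huu),
    pt_dist_col r a b hb u' v v' hvv,
    pt_dist_col r a b hb u v' v (Ne.symm hvv),
    pt_dist_diag r a b u u' v v' huu hvv,
    pt_dist_diag r a b u' u v v' (Ne.symm huu) hvv,
    hcase⟩
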